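/- Let K ≥ 1, θ > 0, and nonnegative reals l_1, …, l_{K+1} with l_1 + ⋯ + l_{K+1} = D. Then (1/2)θ·l_1² + (1/4)θ·(l_2² + ⋯ + l_K²) + (1/2)θ·l_{K+1}² ≥ (θ/(4K))·D², with equality if and only if l_1 = l_{K+1} = D/(2K) and l_2 = ⋯ = l_K = D/K. -/

import Mathlib

/-- CTTL quadratic program: for `K ≥ 1`, `θ > 0`, and nonnegative subsegment
lengths `l 0, …, l K` summing to `D`, the lost area
`(1/2)θ l₀² + (1/4)θ (l₁² + ⋯ + l_{K-1}²) + (1/2)θ l_K²` is at least `(θ/(4K))·D²`,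
with equality iff the boundary lengths are `D/(2K)` and the interior lengths `D/K`. -/
theorem stmt_8 (K : ℕ) (hK : 1 ≤ K) (θ D : ℝ) (hθ : 0 < θ)
    (l : Fin (K + 1) → ℝ) (hl : ∀ i, 0 ≤ l i) (hsum : ∑ i, l i = D) :
    (θ / (4 * K)) * D ^ 2 ≤
        ∑ i, (if i = 0 ∨ i = Fin.last K then 1 / 2 else 1 / 4 : ℝ) * θ * (l i) ^ 2 ∧
      ((∑ i, (if i = 0 ∨ i = Fin.last K then 1 / 2 else 1 / 4 : ℝ) * θ * (l i) ^ 2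
          = (θ / (4 * K)) * D ^ 2) ↔
        (l 0 = D / (2 * K) ∧ l (Fin.last K) = D / (2 * K) ∧
          ∀ i, i ≠ 0 → i ≠ Fin.last K → l i = D / K)) := by
  have hKR : (0:ℝ) < (K:ℝ) := by exact_mod_cast hK
  have hK0 : (K:ℝ) ≠ 0 := ne_of_gt hKR
  have h0last : (0 : Fin (K+1)) ≠ Fin.last K := by
    intro h
    have := congrArg Fin.val h
    simp [Fin.last] at this
    omega
  set c : Fin (K+1) → ℝ := fun i => if i = 0 ∨ i = Fin.last K then D/(2*K) else D/K with hc
  have hwc : ∀ i : Fin (K+1),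
      (if i = 0 ∨ i = Fin.last K then (1/2:ℝ) else 1/4) * c i = D/(4*K) := by
    intro i
    by_cases h : i = 0 ∨ i = Fin.last K
    · simp only [hc, h, if_true]
      ring
    · simp only [hc, h, if_false]
      ring
  have hcsum : ∑ i, c i = D := by
    have h1 : ∀ i : Fin (K+1), c i =
        D/K - ((if i = 0 then D/(2*K) else 0) + (if i = Fin.last K then D/(2*K) else 0)) := by
      intro i
      by_cases h0 : i = 0
      · subst h0
        simp only [hc, if_pos (Or.inl rfl), if_pos rfl, if_neg h0last, if_true]
        field_simp
        ring
      · by_cases hL : i = Fin.last K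
        · subst hL
          simp only [hc, if_pos (Or.inr rfl), if_neg h0last.symm, if_pos rfl, if_true]
          field_simp
          ring
        · simp only [hc, if_neg (by tauto : ¬(i = 0 ∨ i = Fin.last K)), if_neg h0, if_neg hL]
          ring
    rw [Finset.sum_congr rfl (fun i _ => h1 i)]
    rw [Finset.sum_sub_distrib, Finset.sum_add_distrib, Finset.sum_const]
    simp only [Finset.sum_ite_eq', Finset.mem_univ, if_true, Finset.card_univ,
      Fintype.card_fin, nsmul_eq_mul]
    push_cast
    field_simp
    ring
  have expand : ∀ i : Fin (K+1),
      (if i = 0 ∨ i = Fin.last K then (1/2:ℝ) else 1/4) * (l i - c i)^2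
        = (if i = 0 ∨ i = Fin.last K then (1/2:ℝ) else 1/4) * l i^2
            - 2*(D/(4*K))*l i + (D/(4*K))*(c i) := by
    intro i
    have h := hwc i
    set w : ℝ := if i = 0 ∨ i = Fin.last K then (1/2:ℝ) else 1/4 with hwdef
    linear_combination (c i - 2 * l i) * h
  have key : ∑ i, (if i = 0 ∨ i = Fin.last K then (1/2:ℝ) else 1/4) * θ * (l i)^2
      = θ * ∑ i, (if i = 0 ∨ i = Fin.last K then (1/2:ℝ) else 1/4) * (l i - c i)^2
        + (θ/(4*K)) * D^2 := by
    have hs : ∑ i, (if i = 0 ∨ i = Fin.last K then (1/2:ℝ) else 1/4) * (l i - c i)^2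
        = ∑ i, (if i = 0 ∨ i = Fin.last K then (1/2:ℝ) else 1/4) * (l i)^2
            - 2*(D/(4*K))*D + (D/(4*K))*D := by
      rw [Finset.sum_congr rfl (fun i _ => expand i)]
      rw [Finset.sum_add_distrib, Finset.sum_sub_distrib, ← Finset.mul_sum, ← Finset.mul_sum,
        hsum, hcsum]
    rw [hs]
    have : ∑ i, (if i = 0 ∨ i = Fin.last K then (1/2:ℝ) else 1/4) * θ * (l i)^2
        = θ * ∑ i, (if i = 0 ∨ i = Fin.last K then (1/2:ℝ) else 1/4) * (l i)^2 := by
      rw [Finset.mul_sum]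
      exact Finset.sum_congr rfl (fun i _ => by ring)
    rw [this]
    field_simp
    ring
  have hnonneg : ∀ i ∈ Finset.univ,
      (0:ℝ) ≤ (if i = 0 ∨ i = Fin.last K then (1/2:ℝ) else 1/4) * (l i - c i)^2 := by
    intro i _
    by_cases h : i = 0 ∨ i = Fin.last K <;> simp only [h, if_true, if_false] <;> positivity
  have hsnn : (0:ℝ) ≤ ∑ i, (if i = 0 ∨ i = Fin.last K then (1/2:ℝ) else 1/4) * (l i - c i)^2 :=
    Finset.sum_nonneg hnonneg
  constructor
  · nlinarith [mul_nonneg hθ.le hsnn]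
  · rw [key]
    constructor
    · intro h
      have hz : ∑ i, (if i = 0 ∨ i = Fin.last K then (1/2:ℝ) else 1/4) * (l i - c i)^2 = 0 := by
        have hθS : θ * ∑ i, (if i = 0 ∨ i = Fin.last K then (1/2:ℝ) else 1/4)
            * (l i - c i)^2 = 0 := by linarith
        exact (mul_eq_zero.mp hθS).resolve_left (ne_of_gt hθ)
      have hall := (Finset.sum_eq_zero_iff_of_nonneg hnonneg).mp hz
      have hlc : ∀ i, l i = c i := by
        intro i
        have hi := hall i (Finset.mem_univ i)
        have hw0 : (if i = 0 ∨ i = Fin.last K then (1/2:ℝ) else 1/4) ≠ 0 := by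
          by_cases h : i = 0 ∨ i = Fin.last K <;> simp [h]
        have : (l i - c i)^2 = 0 := by
          rcases mul_eq_zero.mp hi with h' | h'
          · exact absurd h' hw0
          · exact h'
        have := pow_eq_zero_iff (n := 2) (by norm_num) |>.mp this
        linarith
      refine ⟨?_, ?_, ?_⟩
      · rw [hlc 0]; simp [hc]
      · rw [hlc (Fin.last K)]; simp [hc]
      · intro i hi0 hiL
        rw [hlc i]
        simp [hc, hi0, hiL]
    · rintro ⟨h0, hL, hmid⟩
      have hlc : ∀ i, l i = c i := by
        intro i
        by_cases hi0 : i = 0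
        · subst hi0; rw [h0]; simp [hc]
        · by_cases hiL : i = Fin.last K
          · subst hiL; rw [hL]; simp [hc]
          · rw [hmid i hi0 hiL]; simp [hc, hi0, hiL]
      have : ∑ i, (if i = 0 ∨ i = Fin.last K then (1/2:ℝ) else 1/4) * (l i - c i)^2 = 0 :=
        Finset.sum_eq_zero (fun i _ => by rw [hlc i]; ring)
      rw [this]
      ring
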